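/- For every tree T, γ_r(T) = 2 if and only if T is isomorphic to P₂ or P₄. -/

import Mathlib

open scoped Classical
open Finset

/-- A restrained Italian dominating function: values in {0,1,2}, every 0-vertex has
neighborhood weight ≥ 2, and every 0-vertex has a 0-neighbor. -/
def IsRIDF {V : Type*} [Fintype V] (G : SimpleGraph V) (f : V → ℕ) : Prop :=
  (∀ v, f v ≤ 2) ∧
  (∀ v, f v = 0 → 2 ≤ ∑ u ∈ Finset.univ.filter (fun u => G.Adj v u), f u) ∧
  (∀ v, f v = 0 → ∃ u, G.Adj v u ∧ f u = 0)

/-- The restrained Italian domination number. -/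
noncomputable def ridNum {V : Type*} [Fintype V] (G : SimpleGraph V) : ℕ :=
  sInf {w | ∃ f : V → ℕ, IsRIDF G f ∧ ∑ v, f v = w}

/-- A restrained dominating set. -/
def IsRDS {V : Type*} [Fintype V] (G : SimpleGraph V) (S : Finset V) : Prop :=
  (∀ v ∉ S, ∃ u ∈ S, G.Adj v u) ∧ (∀ v ∉ S, ∃ u ∉ S, G.Adj v u)

/-- The restrained domination number. -/
noncomputable def rdNum {V : Type*} [Fintype V] (G : SimpleGraph V) : ℕ :=
  sInf {k | ∃ S : Finset V, IsRDS G S ∧ S.card = k}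

instance pathAdjDec {n : ℕ} : DecidableRel (SimpleGraph.pathGraph n).Adj := fun _ _ =>
  decidable_of_iff _ (SimpleGraph.pathGraph_adj).symm

lemma iso_p2 {V : Type*} (T : SimpleGraph V) (a b : V) (hab : a ≠ b)
    (cover : ∀ x : V, x = a ∨ x = b) (h1 : T.Adj a b) :
    Nonempty (T ≃g SimpleGraph.pathGraph 2) := by
  have hinj : Function.Injective (![a, b] : Fin 2 → V) := by
    intro i j hij
    fin_cases i <;> fin_cases j <;> simp_all
  have hsurj : Function.Surjective (![a, b] : Fin 2 → V) := by
    intro x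
    rcases cover x with rfl | rfl
    · exact ⟨0, rfl⟩
    · exact ⟨1, rfl⟩
  refine ⟨(RelIso.symm (⟨Equiv.ofBijective _ ⟨hinj, hsurj⟩, ?_⟩ :
    SimpleGraph.pathGraph 2 ≃g T) : T ≃g SimpleGraph.pathGraph 2)⟩
  intro i j
  fin_cases i <;> fin_cases j <;>
    simp [SimpleGraph.pathGraph_adj, h1, h1.symm, T.irrefl]
  exacts [h1, h1.symm]

lemma iso_p4 {V : Type*} (T : SimpleGraph V) (a va vb b : V)
    (d1 : a ≠ va) (d2 : a ≠ vb) (d3 : a ≠ b) (d4 : va ≠ vb) (d5 : va ≠ b) (d6 : vb ≠ b)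
    (cover : ∀ x : V, x = a ∨ x = va ∨ x = vb ∨ x = b)
    (h1 : T.Adj a va) (h2 : T.Adj va vb) (h3 : T.Adj vb b)
    (n1 : ¬ T.Adj a vb) (n2 : ¬ T.Adj a b) (n3 : ¬ T.Adj va b) :
    Nonempty (T ≃g SimpleGraph.pathGraph 4) := by
  have hinj : Function.Injective (![a, va, vb, b] : Fin 4 → V) := by
    intro i j hij
    fin_cases i <;> fin_cases j <;> simp_all
  have hsurj : Function.Surjective (![a, va, vb, b] : Fin 4 → V) := by
    intro x
    rcases cover x with rfl | rfl | rfl | rfl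
    · exact ⟨0, rfl⟩
    · exact ⟨1, rfl⟩
    · exact ⟨2, rfl⟩
    · exact ⟨3, rfl⟩
  refine ⟨(RelIso.symm (⟨Equiv.ofBijective _ ⟨hinj, hsurj⟩, ?_⟩ :
    SimpleGraph.pathGraph 4 ≃g T) : T ≃g SimpleGraph.pathGraph 4)⟩
  intro i j
  fin_cases i <;> fin_cases j <;>
    first
    | exact iff_of_false T.irrefl (by decide)
    | exact iff_of_true h1 (by decide)
    | exact iff_of_true h1.symm (by decide)
    | exact iff_of_true h2 (by decide)
    | exact iff_of_true h2.symm (by decide)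
    | exact iff_of_true h3 (by decide)
    | exact iff_of_true h3.symm (by decide)
    | exact iff_of_false n1 (by decide)
    | exact iff_of_false n2 (by decide)
    | exact iff_of_false n3 (by decide)
    | exact iff_of_false (fun h => n1 h.symm) (by decide)
    | exact iff_of_false (fun h => n2 h.symm) (by decide)
    | exact iff_of_false (fun h => n3 h.symm) (by decide)



lemma walk_stay {V : Type*} {G : SimpleGraph V} {a b : V}
    (hab : ∀ x, G.Adj a x → x = b) (hba : ∀ x, G.Adj b x → x = a) :
    ∀ {x y : V} (_ : G.Walk x y), (x = a ∨ x = b) → (y = a ∨ y = b) := by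
  intro x y p
  induction p with
  | nil => exact id
  | cons h p ih =>
    rename_i u v w
    intro hx
    apply ih
    rcases hx with rfl | rfl
    · exact Or.inr (hab _ h)
    · exact Or.inl (hba _ h)

lemma exists_adj_of_ne {V : Type*} {G : SimpleGraph V} {x y : V} (p : G.Walk x y)
    (h : x ≠ y) : ∃ z, G.Adj x z := by
  cases p with
  | nil => exact absurd rfl h
  | cons h' _ => exact ⟨_, h'⟩

lemma main_forward {V : Type*} [Fintype V] (T : SimpleGraph V) (hT : T.IsTree)
    (S : Finset V) (hS : IsRDS T S) (hcard : S.card = 2) :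
    Nonempty (T ≃g SimpleGraph.pathGraph 2) ∨ Nonempty (T ≃g SimpleGraph.pathGraph 4) := by
  classical
  obtain ⟨a, b, hab, rfl⟩ := Finset.card_eq_two.1 hcard
  have hconn := hT.isConnected
  have hn2 : 2 ≤ Fintype.card V := by
    have := Finset.card_le_card (Finset.subset_univ ({a, b} : Finset V))
    simpa [hcard] using this
  -- every vertex has a neighbor
  have hdeg1 : ∀ x : V, 1 ≤ T.degree x := by
    intro x
    obtain ⟨y, hy⟩ := Fintype.exists_ne_of_one_lt_card (by omega) x
    obtain ⟨z, hz⟩ := exists_adj_of_ne ((hconn x y).some) (Ne.symm hy)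
    rw [Nat.one_le_iff_ne_zero, ← Nat.pos_iff_ne_zero, T.degree_pos_iff_exists_adj]
    exact ⟨z, hz⟩
  by_cases hU : ∀ v : V, v ∈ ({a, b} : Finset V)
  · -- two-vertex case: T ≅ P2
    left
    have hadj : T.Adj a b := by
      obtain ⟨z, hz⟩ := exists_adj_of_ne ((hconn a b).some) hab
      have : z = b := by
        have := hU z
        simp only [Finset.mem_insert, Finset.mem_singleton] at this
        rcases this with rfl | rfl
        · exact absurd hz (T.irrefl)
        · rfl
      rwa [this] at hz
    refine iso_p2 T a b hab (fun x => ?_) hadj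
    have := hU x
    simp only [Finset.mem_insert, Finset.mem_singleton] at this
    exact this
  · -- four-vertex case: T ≅ P4
    right
    push_neg at hU
    obtain ⟨v0, hv0⟩ := hU
    -- degree bounds for outside vertices
    have hout : ∀ x, x ∉ ({a, b} : Finset V) → 2 ≤ T.degree x := by
      intro x hx
      obtain ⟨s, hsS, hsadj⟩ := hS.1 x hx
      obtain ⟨u, huS, huadj⟩ := hS.2 x hx
      have hsu : s ≠ u := fun h => huS (h ▸ hsS)
      have hsub : ({s, u} : Finset V) ⊆ T.neighborFinset x := by
        intro z hz
        simp only [Finset.mem_insert, Finset.mem_singleton] at hz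
        rcases hz with rfl | rfl <;> simp [SimpleGraph.mem_neighborFinset, hsadj, huadj]
      calc 2 = ({s, u} : Finset V).card := (Finset.card_pair hsu).symm
        _ ≤ _ := Finset.card_le_card hsub
  -- degree sum
    have hedge : T.edgeFinset.card + 1 = Fintype.card V := hT.card_edgeFinset
    have hsum : ∑ x : V, T.degree x = 2 * T.edgeFinset.card :=
      T.sum_degrees_eq_twice_card_edges
    set g : V → ℕ := fun x => if x ∈ ({a, b} : Finset V) then 1 else 2 with hg
    have hgval1 : ∀ x, x ∈ ({a, b} : Finset V) → g x = 1 := fun x hx => if_pos hx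
    have hgval2 : ∀ x, x ∉ ({a, b} : Finset V) → g x = 2 := fun x hx => if_neg hx
    have hgle : ∀ x, g x ≤ T.degree x := by
      intro x
      by_cases hx : x ∈ ({a, b} : Finset V)
      · rw [hgval1 x hx]; exact hdeg1 x
      · rw [hgval2 x hx]; exact hout x hx
    have hgsum : ∑ x : V, g x = 2 * (Fintype.card V) - 2 := by
      rw [← Finset.sum_add_sum_compl ({a, b} : Finset V)]
      have h1 : ∑ x ∈ ({a, b} : Finset V), g x = 2 := by
        rw [Finset.sum_congr rfl (fun x hx => hgval1 x hx)]
        simp [hcard]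
      have h2 : ∑ x ∈ ({a, b} : Finset V)ᶜ, g x = 2 * (Fintype.card V - 2) := by
        rw [Finset.sum_congr rfl (fun x hx => hgval2 x (Finset.mem_compl.1 hx))]
        rw [Finset.sum_const, smul_eq_mul, Finset.card_compl, hcard]
        ring
      rw [h1, h2]; omega
    have hdegsum : ∑ x : V, T.degree x = 2 * (Fintype.card V) - 2 := by
      rw [hsum]; omega
    have hdeq : ∀ x, T.degree x = g x := by
      by_contra hc
      push_neg at hc
      obtain ⟨x, hx⟩ := hc
      have hlt : ∑ y : V, g y < ∑ y : V, T.degree y :=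
        Finset.sum_lt_sum (fun i _ => hgle i)
          ⟨x, Finset.mem_univ x, lt_of_le_of_ne (hgle x) (fun h => hx h.symm)⟩
      omega
    have hdega : T.degree a = 1 := by rw [hdeq a, hgval1 a (by simp)]
    have hdegb : T.degree b = 1 := by rw [hdeq b, hgval1 b (by simp)]
    have hdego : ∀ x, x ∉ ({a, b} : Finset V) → T.degree x = 2 := by
      intro x hx; rw [hdeq x, hgval2 x hx]
    -- a's unique neighbor
    have hnbr : ∀ x : V, T.degree x = 1 → ∀ y z, T.Adj x y → T.Adj x z → y = z := by
      intro x hx y z hy hz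
      have h1 := Finset.card_eq_one.1 (by rwa [← SimpleGraph.card_neighborFinset_eq_degree] at hx)
      obtain ⟨c, hc⟩ := h1
      have hy' : y ∈ T.neighborFinset x := by simpa [SimpleGraph.mem_neighborFinset] using hy
      have hz' : z ∈ T.neighborFinset x := by simpa [SimpleGraph.mem_neighborFinset] using hz
      rw [hc, Finset.mem_singleton] at hy' hz'
      rw [hy', hz']
    have hnab : ¬ T.Adj a b := by
      intro hadj
      have h1 : ∀ x, T.Adj a x → x = b := fun x hx => hnbr a hdega x b hx hadj
      have h2 : ∀ x, T.Adj b x → x = a := fun x hx => hnbr b hdegb x a hx hadj.symm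
      have := walk_stay h1 h2 ((hconn a v0).some) (Or.inl rfl)
      rcases this with rfl | rfl <;> simp at hv0
    obtain ⟨va, hva⟩ := (T.degree_pos_iff_exists_adj a).1 (by omega : 0 < T.degree a)
    obtain ⟨vb, hvb⟩ := (T.degree_pos_iff_exists_adj b).1 (by omega : 0 < T.degree b)
    have hvaS : va ∉ ({a, b} : Finset V) := by
      simp only [Finset.mem_insert, Finset.mem_singleton]
      rintro (rfl | rfl)
      · exact T.irrefl hva
      · exact hnab hva
    have hvbS : vb ∉ ({a, b} : Finset V) := by
      simp only [Finset.mem_insert, Finset.mem_singleton]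
      rintro (rfl | rfl)
      · exact hnab hvb.symm
      · exact T.irrefl hvb
    -- va ≠ vb
    have hvavb : va ≠ vb := by
      rintro rfl
      obtain ⟨u, huS, huadj⟩ := hS.2 va hvaS
      have hua : u ≠ a := by rintro rfl; exact huS (by simp)
      have hub : u ≠ b := by rintro rfl; exact huS (by simp)
      have hsub : ({a, b, u} : Finset V) ⊆ T.neighborFinset va := by
        intro z hz
        simp only [Finset.mem_insert, Finset.mem_singleton] at hz
        rcases hz with rfl | rfl | rfl <;>
          simp [SimpleGraph.mem_neighborFinset, hva.symm, hvb.symm, huadj]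
      have h3 : ({a, b, u} : Finset V).card = 3 := by
        rw [Finset.card_insert_of_notMem (by simp [hab, hua.symm]),
          Finset.card_insert_of_notMem (by simp [hub.symm]), Finset.card_singleton]
      have := Finset.card_le_card hsub
      rw [h3, SimpleGraph.card_neighborFinset_eq_degree, hdego va hvaS] at this
      omega
    -- outside set is exactly {va, vb}
    have houtset : ∀ u, u ∉ ({a, b} : Finset V) → u = va ∨ u = vb := by
      intro u hu
      obtain ⟨s, hsS, hsadj⟩ := hS.1 u hu
      simp only [Finset.mem_insert, Finset.mem_singleton] at hsS
      rcases hsS with h | h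
      · rw [h] at hsadj
        exact Or.inl (hnbr a hdega u va hsadj.symm hva)
      · rw [h] at hsadj
        exact Or.inr (hnbr b hdegb u vb hsadj.symm hvb)
    -- va adj vb
    have hmid : T.Adj va vb := by
      obtain ⟨u, huS, huadj⟩ := hS.2 va hvaS
      rcases houtset u huS with rfl | rfl
      · exact absurd huadj (T.irrefl)
      · exact huadj
    -- non-adjacencies
    have hnavb : ¬ T.Adj a vb := by
      intro h
      exact hvavb (hnbr a hdega va vb hva h)
    have hnbva : ¬ T.Adj b va := by
      intro h
      exact hvavb (hnbr b hdegb va vb h hvb)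
    -- distinctness
    have d1 : a ≠ va := fun h => hvaS (by simp [← h])
    have d2 : a ≠ vb := fun h => hvbS (by simp [← h])
    have d3 : b ≠ va := fun h => hvaS (by simp [← h])
    have d4 : b ≠ vb := fun h => hvbS (by simp [← h])
    refine iso_p4 T a va vb b d1 d2 hab hvavb (Ne.symm d3) (Ne.symm d4) (fun x => ?_)
      hva hmid hvb.symm hnavb hnab (fun h => hnbva h.symm)
    by_cases hx : x ∈ ({a, b} : Finset V)
    · simp only [Finset.mem_insert, Finset.mem_singleton] at hx
      tauto
    · rcases houtset x hx with h | h <;> tauto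

lemma isRDS_map {V W : Type*} [Fintype V] [Fintype W] {G : SimpleGraph V} {G' : SimpleGraph W}
    (e : G ≃g G') {S : Finset V} (h : IsRDS G S) : IsRDS G' (S.image e) := by
  classical
  obtain ⟨h1, h2⟩ := h
  constructor
  · intro v hv
    have hv' : e.symm v ∉ S := by
      intro hc
      exact hv (by simpa using mem_image_of_mem (⇑e) hc)
    obtain ⟨u, hu, hadj⟩ := h1 _ hv'
    refine ⟨e u, mem_image_of_mem _ hu, ?_⟩
    have := e.map_adj_iff.2 hadj
    simpa using this
  · intro v hv
    have hv' : e.symm v ∉ S := by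
      intro hc
      exact hv (by simpa using mem_image_of_mem (⇑e) hc)
    obtain ⟨u, hu, hadj⟩ := h2 _ hv'
    refine ⟨e u, ?_, ?_⟩
    · intro hc
      obtain ⟨x, hx, hxe⟩ := mem_image.1 hc
      exact hu (by rwa [e.injective hxe] at hx)
    · have := e.map_adj_iff.2 hadj
      simpa using this

lemma rdNum_eq_of_iso {V W : Type*} [Fintype V] [Fintype W] {G : SimpleGraph V}
    {G' : SimpleGraph W} (e : G ≃g G') : rdNum G = rdNum G' := by
  classical
  unfold rdNum
  congr 1
  ext k
  constructor
  · rintro ⟨S, hS, rfl⟩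
    exact ⟨S.image e, isRDS_map e hS, by rw [card_image_of_injective _ e.injective]⟩
  · rintro ⟨S, hS, rfl⟩
    exact ⟨S.image e.symm, isRDS_map e.symm hS, by rw [card_image_of_injective _ e.symm.injective]⟩

lemma rdNum_path2 : rdNum (SimpleGraph.pathGraph 2) = 2 := by
  have h2 : (2 : ℕ) ∈ {k | ∃ S : Finset (Fin 2), IsRDS (SimpleGraph.pathGraph 2) S ∧ S.card = k} := by
    refine ⟨Finset.univ, ?_, by decide⟩
    constructor <;> decide
  refine le_antisymm (Nat.sInf_le h2) ?_
  refine le_csInf ⟨2, h2⟩ ?_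
  rintro k ⟨S, hS, rfl⟩
  by_contra hc
  push_neg at hc
  interval_cases h : S.card <;> revert hS <;> revert h <;> revert S <;> simp only [IsRDS] <;> decide

lemma rdNum_path4 : rdNum (SimpleGraph.pathGraph 4) = 2 := by
  have h2 : (2 : ℕ) ∈ {k | ∃ S : Finset (Fin 4), IsRDS (SimpleGraph.pathGraph 4) S ∧ S.card = k} := by
    refine ⟨{0, 3}, ?_, by decide⟩
    constructor <;> decide
  refine le_antisymm (Nat.sInf_le h2) ?_
  refine le_csInf ⟨2, h2⟩ ?_
  rintro k ⟨S, hS, rfl⟩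
  by_contra hc
  push_neg at hc
  interval_cases h : S.card <;> revert hS <;> revert h <;> revert S <;> simp only [IsRDS] <;> decide

theorem stmt14 {V : Type*} [Fintype V] (T : SimpleGraph V) (hT : T.IsTree) :
    rdNum T = 2 ↔
      (Nonempty (T ≃g SimpleGraph.pathGraph 2) ∨ Nonempty (T ≃g SimpleGraph.pathGraph 4)) := by
  constructor
  · intro h
    have hne : {k | ∃ S : Finset V, IsRDS T S ∧ S.card = k}.Nonempty := by
      refine ⟨Fintype.card V, Finset.univ, ⟨?_, ?_⟩, Finset.card_univ⟩ <;>
        exact fun v hv => absurd (Finset.mem_univ v) hv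
    have := Nat.sInf_mem hne
    rw [show sInf {k | ∃ S : Finset V, IsRDS T S ∧ S.card = k} = rdNum T from rfl, h] at this
    obtain ⟨S, hS, hc⟩ := this
    exact main_forward T hT S hS hc
  · intro h
    rcases h with h | h
    · exact (rdNum_eq_of_iso h.some).trans rdNum_path2
    · exact (rdNum_eq_of_iso h.some).trans rdNum_path4
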